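/- Let S be the set of tuples (g_1,...,g_r) ∈ F_q[T]^r such that for every monic irreducible polynomial l in a fixed finite set S_0 of monic irreducibles, v_l(g_r) = 0 or v_l(g_r) ≥ p. Then the density of S (with respect to the height ordering by max degree < X among tuples with g_r ≠ 0) equals ∏_{l ∈ S_0} (1 - 1/q_l + 1/q_l^p), where q_l = q^{deg l}. -/

import Mathlib

open Polynomial

variable {Fq : Type} [Field Fq] [Fintype Fq]

lemma fin_of_deg (n : ℕ) (Q : Polynomial Fq → Prop) (h : ∀ a, Q a → a.degree < (n : ℕ)) :
    Finite {a : Polynomial Fq // Q a} := by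
  have : Finite (Fin n → Fq) := inferInstance
  refine Finite.of_injective (fun a => degreeLTEquiv Fq n ⟨a.1, mem_degreeLT.2 (h a.1 a.2)⟩) ?_
  intro a b hab
  have h := (degreeLTEquiv Fq n).injective hab
  have h2 : a.1 = b.1 := Subtype.mk_eq_mk.mp h
  exact Subtype.ext h2

lemma fin_deg (n : ℕ) (Q : Polynomial Fq → Prop) :
    Finite {a : Polynomial Fq // a.degree < (n : ℕ) ∧ Q a} :=
  fin_of_deg n _ (fun _ ha => ha.1)

lemma card_degLT (n : ℕ) :
    Nat.card {a : Polynomial Fq // a.degree < (n : ℕ)} = Fintype.card Fq ^ n := by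
  have e1 : {a : Polynomial Fq // a.degree < (n : ℕ)} ≃ degreeLT Fq n :=
    Equiv.subtypeEquivRight (fun a => (mem_degreeLT).symm)
  have e2 := (degreeLTEquiv Fq n).toEquiv
  rw [Nat.card_congr (e1.trans e2)]
  simp [Nat.card_eq_fintype_card]

lemma card_split (n : ℕ) (Q : Polynomial Fq → Prop) :
    Nat.card {a : Polynomial Fq // a.degree < (n : ℕ) ∧ Q a} +
      Nat.card {a : Polynomial Fq // a.degree < (n : ℕ) ∧ ¬ Q a} = Fintype.card Fq ^ n := by
  classical
  have e : ({a : Polynomial Fq // a.degree < (n : ℕ) ∧ Q a} ⊕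
      {a : Polynomial Fq // a.degree < (n : ℕ) ∧ ¬ Q a}) ≃ {a : Polynomial Fq // a.degree < (n : ℕ)} :=
    (Equiv.sumCongr (Equiv.subtypeSubtypeEquivSubtypeInter _ _).symm
      ((Equiv.subtypeSubtypeEquivSubtypeInter (fun a : Polynomial Fq => a.degree < (n : ℕ))
        (fun a => ¬ Q a)).symm)).trans
      (Equiv.sumCompl (fun x : {a : Polynomial Fq // a.degree < (n : ℕ)} => Q x.1))
  have := fin_deg (Fq := Fq) n Q
  have := fin_deg (Fq := Fq) n (fun a => ¬ Q a)
  rw [← card_degLT n, ← Nat.card_congr e, Nat.card_sum]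

lemma card_multiples (m : Polynomial Fq) (hm : m.Monic) (n : ℕ) (hn : m.natDegree ≤ n) :
    Nat.card {a : Polynomial Fq // a.degree < (n : ℕ) ∧ m ∣ a} =
      Fintype.card Fq ^ (n - m.natDegree) := by
  have hm0 : m ≠ 0 := hm.ne_zero
  have hdeg : ∀ b : Polynomial Fq, b.degree < ((n - m.natDegree : ℕ) : ℕ) →
      (m * b).degree < (n : ℕ) := by
    intro b hb
    rcases eq_or_ne b 0 with h0 | h0
    · rw [h0, mul_zero, degree_zero]
      exact_mod_cast WithBot.bot_lt_coe n
    · rw [← natDegree_lt_iff_degree_lt h0] at hb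
      rw [← natDegree_lt_iff_degree_lt (mul_ne_zero hm0 h0), natDegree_mul hm0 h0]
      omega
  have hbij : Function.Bijective
      (fun b : {b : Polynomial Fq // b.degree < ((n - m.natDegree : ℕ) : ℕ)} =>
        (⟨m * b.1, hdeg b.1 b.2, Dvd.intro _ rfl⟩ :
          {a : Polynomial Fq // a.degree < (n : ℕ) ∧ m ∣ a})) := by
    constructor
    · intro a b hab
      have h2 : m * a.1 = m * b.1 := congrArg Subtype.val hab
      exact Subtype.ext (mul_left_cancel₀ hm0 h2)
    · rintro ⟨a, ha, b, rfl⟩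
      rcases eq_or_ne b 0 with h0 | h0
      · refine ⟨⟨0, ?_⟩, Subtype.ext (by simp [h0])⟩
        rw [degree_zero]
        exact_mod_cast WithBot.bot_lt_coe (n - m.natDegree)
      · refine ⟨⟨b, ?_⟩, rfl⟩
        rw [← natDegree_lt_iff_degree_lt (mul_ne_zero hm0 h0), natDegree_mul hm0 h0] at ha
        rw [← natDegree_lt_iff_degree_lt h0]
        omega
  rw [← Nat.card_congr (Equiv.ofBijective _ hbij), card_degLT]

lemma card_base (l : Polynomial Fq) (hl : l.Monic) (hirr : Irreducible l) (p : ℕ) (hp : 1 ≤ p) :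
    Nat.card {u : Polynomial Fq // u.degree < ((p * l.natDegree : ℕ) : ℕ) ∧ (¬ l ∣ u ∨ l ^ p ∣ u)} =
      Fintype.card Fq ^ (p * l.natDegree) - Fintype.card Fq ^ ((p - 1) * l.natDegree) + 1 := by
  classical
  have hl0 : l ≠ 0 := hl.ne_zero
  have hlp0 : l ^ p ≠ 0 := pow_ne_zero _ hl0
  have hdegpow : (l ^ p).degree = ((p * l.natDegree : ℕ) : ℕ) := by
    rw [degree_eq_natDegree hlp0, natDegree_pow]
  have e : {u : Polynomial Fq // u.degree < ((p * l.natDegree : ℕ) : ℕ) ∧ (¬ l ∣ u ∨ l ^ p ∣ u)} ≃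
      ({u : Polynomial Fq // u.degree < ((p * l.natDegree : ℕ) : ℕ) ∧ ¬ l ∣ u} ⊕ PUnit.{1}) := by
    refine ⟨fun u => if h : l ∣ u.1 then Sum.inr PUnit.unit else Sum.inl ⟨u.1, u.2.1, h⟩,
      fun x => Sum.rec (fun a => ⟨a.1, a.2.1, Or.inl a.2.2⟩)
        (fun _ => ⟨0, by rw [degree_zero]; exact_mod_cast WithBot.bot_lt_coe _, Or.inr (dvd_zero _)⟩) x,
      ?_, ?_⟩
    · rintro ⟨u, hu, hc⟩
      by_cases h : l ∣ u
      · have hup : l ^ p ∣ u := hc.resolve_left (by simpa using h)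
        have : u = 0 := eq_zero_of_dvd_of_degree_lt hup (by rw [hdegpow]; exact hu)
        simp [h, this]
      · simp [h]
    · rintro (⟨a, ha, hna⟩ | ⟨⟩)
      · simp [hna]
      · simp
  rw [Nat.card_congr e]
  have := fin_deg (Fq := Fq) (p * l.natDegree) (fun u => ¬ l ∣ u)
  rw [Nat.card_sum]
  have hsplit := card_split (Fq := Fq) (p * l.natDegree) (fun u => l ∣ u)
  have hmul := card_multiples l hl (p * l.natDegree)
    (by nlinarith [hirr.natDegree_pos, hp])
  have hsub : p * l.natDegree - l.natDegree = (p - 1) * l.natDegree := by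
    rw [Nat.sub_mul, one_mul]
  rw [hmul, hsub] at hsplit
  simp only [Nat.card_unique]
  omega

lemma mod_eq_of_dvd (m a u : Polynomial Fq) (hm : m.Monic) (hd : m ∣ a - u)
    (hu : u.degree < m.degree) : a %ₘ m = u := by
  have key : a - a %ₘ m = m * (a /ₘ m) := by
    have := modByMonic_add_div a m
    linear_combination -this
  have h1 : m ∣ (a %ₘ m) - u := by
    have : (a %ₘ m) - u = (a - u) - (a - a %ₘ m) := by ring
    rw [this]
    exact dvd_sub hd ⟨_, key⟩
  have h2 : ((a %ₘ m) - u).degree < m.degree :=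
    lt_of_le_of_lt (degree_sub_le _ _) (max_lt (degree_modByMonic_lt a hm) hu)
  have := eq_zero_of_dvd_of_degree_lt h1 h2
  exact sub_eq_zero.mp this

lemma dvd_sub_modByMonic (m a : Polynomial Fq) (hm : m.Monic) : m ∣ a %ₘ m - a := by
  have key : a - a %ₘ m = m * (a /ₘ m) := by
    have := modByMonic_add_div a m
    linear_combination -this
  have h : m ∣ -(a - a %ₘ m) := dvd_neg.mpr ⟨_, key⟩
  rw [neg_sub] at h
  exact h

lemma card_crt (m₁ m₂ : Polynomial Fq) (h1 : m₁.Monic) (h2 : m₂.Monic)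
    (hcop : IsCoprime m₁ m₂) (Q₁ Q₂ : Polynomial Fq → Prop)
    (hQ₁ : ∀ a b : Polynomial Fq, m₁ ∣ a - b → (Q₁ a ↔ Q₁ b))
    (hQ₂ : ∀ a b : Polynomial Fq, m₂ ∣ a - b → (Q₂ a ↔ Q₂ b)) :
    Nat.card {a : Polynomial Fq // a.degree < (((m₁ * m₂).natDegree : ℕ) : ℕ) ∧ Q₁ a ∧ Q₂ a} =
      Nat.card {u : Polynomial Fq // u.degree < ((m₁.natDegree : ℕ) : ℕ) ∧ Q₁ u} *
        Nat.card {v : Polynomial Fq // v.degree < ((m₂.natDegree : ℕ) : ℕ) ∧ Q₂ v} := by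
  have h12 : (m₁ * m₂).Monic := h1.mul h2
  have hdeg1 : m₁.degree = (m₁.natDegree : ℕ) := degree_eq_natDegree h1.ne_zero
  have hdeg2 : m₂.degree = (m₂.natDegree : ℕ) := degree_eq_natDegree h2.ne_zero
  have hdeg12 : (m₁ * m₂).degree = ((m₁ * m₂).natDegree : ℕ) := degree_eq_natDegree h12.ne_zero
  let f : {a : Polynomial Fq // a.degree < (((m₁ * m₂).natDegree : ℕ) : ℕ) ∧ Q₁ a ∧ Q₂ a} →
      ({u : Polynomial Fq // u.degree < ((m₁.natDegree : ℕ) : ℕ) ∧ Q₁ u} ×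
       {v : Polynomial Fq // v.degree < ((m₂.natDegree : ℕ) : ℕ) ∧ Q₂ v}) :=
    fun a => (⟨a.1 %ₘ m₁, by rw [← hdeg1]; exact degree_modByMonic_lt _ h1,
        (hQ₁ _ _ (dvd_sub_modByMonic m₁ a.1 h1)).mpr a.2.2.1⟩,
      ⟨a.1 %ₘ m₂, by rw [← hdeg2]; exact degree_modByMonic_lt _ h2,
        (hQ₂ _ _ (dvd_sub_modByMonic m₂ a.1 h2)).mpr a.2.2.2⟩)
  have hbij : Function.Bijective f := by
    constructor
    · rintro ⟨a, ha, hQa⟩ ⟨b, hb, hQb⟩ hab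
      simp only [f, Prod.mk.injEq, Subtype.mk.injEq] at hab
      obtain ⟨e1, e2⟩ := hab
      have d1 : m₁ ∣ a - b := by
        have := dvd_sub (dvd_sub_modByMonic m₁ b h1) (dvd_sub_modByMonic m₁ a h1)
        rw [e1] at this
        simpa using this
      have d2 : m₂ ∣ a - b := by
        have := dvd_sub (dvd_sub_modByMonic m₂ b h2) (dvd_sub_modByMonic m₂ a h2)
        rw [e2] at this
        simpa using this
      have d12 : m₁ * m₂ ∣ a - b := hcop.mul_dvd d1 d2
      have : a - b = 0 := eq_zero_of_dvd_of_degree_lt d12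
        (by rw [hdeg12]; exact lt_of_le_of_lt (degree_sub_le _ _) (max_lt ha hb))
      exact Subtype.ext (sub_eq_zero.mp this)
    · rintro ⟨⟨u, hu, hQu⟩, ⟨v, hv, hQv⟩⟩
      obtain ⟨c, d, hcd⟩ := hcop
      set w : Polynomial Fq := v * (c * m₁) + u * (d * m₂) with hw
      set a : Polynomial Fq := w %ₘ (m₁ * m₂) with ha
      have hwa1 : m₁ ∣ a - w := by
        exact dvd_trans (dvd_mul_right m₁ m₂) (dvd_sub_modByMonic (m₁*m₂) w h12)
      have hwa2 : m₂ ∣ a - w := by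
        exact dvd_trans (dvd_mul_left m₂ m₁) (dvd_sub_modByMonic (m₁*m₂) w h12)
      have hwu : m₁ ∣ w - u := by
        have : w - u = v * c * m₁ - u * c * m₁ := by
          have hd2 : u * (d * m₂) = u * (1 - c * m₁) := by rw [← hcd]; ring
          rw [hw, hd2]; ring
        rw [this]
        exact dvd_sub (Dvd.intro_left _ rfl) (Dvd.intro_left _ rfl)
      have hwv : m₂ ∣ w - v := by
        have : w - v = u * d * m₂ - v * d * m₂ := by
          have hd2 : v * (c * m₁) = v * (1 - d * m₂) := by rw [← hcd]; ring
          rw [hw, hd2]; ring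
        rw [this]
        exact dvd_sub (Dvd.intro_left _ rfl) (Dvd.intro_left _ rfl)
      have hau : m₁ ∣ a - u := by
        have : a - u = (a - w) + (w - u) := by ring
        rw [this]; exact dvd_add hwa1 hwu
      have hav : m₂ ∣ a - v := by
        have : a - v = (a - w) + (w - v) := by ring
        rw [this]; exact dvd_add hwa2 hwv
      have hadeg : a.degree < (((m₁ * m₂).natDegree : ℕ) : ℕ) := by
        rw [← hdeg12]; exact degree_modByMonic_lt _ h12
      refine ⟨⟨a, hadeg, (hQ₁ _ _ hau).mpr hQu, (hQ₂ _ _ hav).mpr hQv⟩, ?_⟩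
      have r1 : a %ₘ m₁ = u := mod_eq_of_dvd m₁ a u h1 hau (by rw [hdeg1]; exact hu)
      have r2 : a %ₘ m₂ = v := mod_eq_of_dvd m₂ a v h2 hav (by rw [hdeg2]; exact hv)
      simp only [f, Prod.mk.injEq]
      exact ⟨Subtype.ext r1, Subtype.ext r2⟩
  rw [Nat.card_congr (Equiv.ofBijective f hbij), Nat.card_prod]

lemma dvd_iff_of_dvd_sub {m a b : Polynomial Fq} (h : m ∣ a - b) : m ∣ a ↔ m ∣ b := by
  constructor
  · intro ha
    have : b = a - (a - b) := by ring
    rw [this]; exact dvd_sub ha h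
  · intro hb
    have : a = b + (a - b) := by ring
    rw [this]; exact dvd_add hb h

lemma card_prod_set (p : ℕ) (hp : 1 ≤ p) (S0 : Finset (Polynomial Fq))
    (hS0 : ∀ l ∈ S0, l.Monic ∧ Irreducible l) :
    Nat.card {a : Polynomial Fq // a.degree < (((∏ l ∈ S0, l ^ p).natDegree : ℕ) : ℕ) ∧
        ∀ l ∈ S0, ¬ l ∣ a ∨ l ^ p ∣ a} =
      ∏ l ∈ S0, (Fintype.card Fq ^ (p * l.natDegree) -
        Fintype.card Fq ^ ((p - 1) * l.natDegree) + 1) := by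
  classical
  revert hS0
  induction S0 using Finset.induction_on with
  | empty =>
      intro _
      simp only [Finset.prod_empty, natDegree_one]
      have : ∀ a : Polynomial Fq, (a.degree < ((0 : ℕ) : ℕ) ∧
          ∀ l, l ∈ (∅ : Finset (Polynomial Fq)) → ¬ l ∣ a ∨ l ^ p ∣ a) ↔ a = 0 := by
        intro a
        constructor
        · rintro ⟨h, -⟩
          have h0 : a.degree < 0 := by exact_mod_cast h
          exact degree_eq_bot.mp (Nat.WithBot.lt_zero_iff.mp h0)
        · rintro rfl
          refine ⟨?_, by simp⟩
          rw [degree_zero]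
          exact_mod_cast WithBot.bot_lt_coe 0
      rw [Nat.card_congr (Equiv.subtypeEquivRight this)]
      have : Unique {a : Polynomial Fq // a = 0} := ⟨⟨⟨0, rfl⟩⟩, by rintro ⟨a, rfl⟩; rfl⟩
      exact Nat.card_unique
  | @insert l T hl ih =>
      intro hS0
      have hlm := (hS0 l (Finset.mem_insert_self l T)).1
      have hli := (hS0 l (Finset.mem_insert_self l T)).2
      have hT : ∀ l' ∈ T, l'.Monic ∧ Irreducible l' :=
        fun l' hl' => hS0 l' (Finset.mem_insert_of_mem hl')
      have hMT : (∏ l' ∈ T, l' ^ p).Monic :=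
        monic_prod_of_monic _ _ (fun l' hl' => (hT l' hl').1.pow _)
      have hcop : IsCoprime (l ^ p) (∏ l' ∈ T, l' ^ p) := by
        apply IsCoprime.pow_left
        rw [hli.coprime_iff_not_dvd]
        intro hdvd
        obtain ⟨l', hl', hdvd'⟩ := (hli.prime).exists_mem_finset_dvd hdvd
        have : l ∣ l' := (hli.prime).dvd_of_dvd_pow hdvd'
        have hassoc : Associated l l' := hli.associated_of_dvd (hT l' hl').2 this
        have : l = l' := eq_of_monic_of_associated hlm (hT l' hl').1 hassoc
        exact hl (this ▸ hl')
      have hprodins : ∏ l' ∈ insert l T, l' ^ p = l ^ p * ∏ l' ∈ T, l' ^ p :=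
        Finset.prod_insert hl
      have econd : ∀ a : Polynomial Fq,
          (a.degree < (((∏ l' ∈ insert l T, l' ^ p).natDegree : ℕ) : ℕ) ∧
            ∀ l' ∈ insert l T, ¬ l' ∣ a ∨ l' ^ p ∣ a) ↔
          (a.degree < (((l ^ p * ∏ l' ∈ T, l' ^ p).natDegree : ℕ) : ℕ) ∧
            (¬ l ∣ a ∨ l ^ p ∣ a) ∧ ∀ l' ∈ T, ¬ l' ∣ a ∨ l' ^ p ∣ a) := by
        intro a
        rw [hprodins, Finset.forall_mem_insert]
      rw [Nat.card_congr (Equiv.subtypeEquivRight econd)]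
      rw [card_crt (l ^ p) (∏ l' ∈ T, l' ^ p) (hlm.pow _) hMT hcop
        (fun a => ¬ l ∣ a ∨ l ^ p ∣ a) (fun a => ∀ l' ∈ T, ¬ l' ∣ a ∨ l' ^ p ∣ a)
        ?_ ?_]
      · rw [Finset.prod_insert hl, ih hT]
        congr 1
        rw [natDegree_pow]
        exact card_base l hlm hli p hp
      · intro a b hab
        have h1 : l ∣ a - b := dvd_trans (dvd_pow_self l (by omega)) hab
        show (¬ l ∣ a ∨ l ^ p ∣ a) ↔ (¬ l ∣ b ∨ l ^ p ∣ b)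
        rw [dvd_iff_of_dvd_sub h1, dvd_iff_of_dvd_sub hab]
      · intro a b hab
        apply forall₂_congr
        intro l' hl'
        have hdvd : l' ^ p ∣ a - b :=
          dvd_trans (Finset.dvd_prod_of_mem (f := fun x => x ^ p) hl') hab
        have h1 : l' ∣ a - b := dvd_trans (dvd_pow_self l' (by omega)) hdvd
        rw [dvd_iff_of_dvd_sub h1, dvd_iff_of_dvd_sub hdvd]

lemma card_scale (M : Polynomial Fq) (hM : M.Monic) (Q : Polynomial Fq → Prop)
    (hQ : ∀ a b : Polynomial Fq, M ∣ a - b → (Q a ↔ Q b)) (X : ℕ) (hX : M.natDegree ≤ X) :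
    Nat.card {a : Polynomial Fq // a.degree < (X : ℕ) ∧ Q a} =
      Nat.card {a : Polynomial Fq // a.degree < ((M.natDegree : ℕ) : ℕ) ∧ Q a} *
        Fintype.card Fq ^ (X - M.natDegree) := by
  have hM0 : M ≠ 0 := hM.ne_zero
  have hdegM : M.degree = ((M.natDegree : ℕ) : ℕ) := degree_eq_natDegree hM0
  have hdiv : ∀ a : Polynomial Fq, a.degree < (X : ℕ) →
      (a /ₘ M).degree < ((X - M.natDegree : ℕ) : ℕ) := by
    intro a ha
    rcases eq_or_ne (a /ₘ M) 0 with h0 | h0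
    · rw [h0, degree_zero]
      exact_mod_cast WithBot.bot_lt_coe _
    · have key : M * (a /ₘ M) = a - a %ₘ M := by
        have := modByMonic_add_div a M
        linear_combination this
      have hlt : (M * (a /ₘ M)).degree < (X : ℕ) := by
        rw [key]
        refine lt_of_le_of_lt (degree_sub_le _ _) (max_lt ha ?_)
        exact lt_of_lt_of_le (degree_modByMonic_lt a hM) (by rw [hdegM]; exact_mod_cast hX)
      rw [← natDegree_lt_iff_degree_lt (mul_ne_zero hM0 h0), natDegree_mul hM0 h0] at hlt
      rw [← natDegree_lt_iff_degree_lt h0]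
      omega
  let f : {a : Polynomial Fq // a.degree < (X : ℕ) ∧ Q a} →
      ({u : Polynomial Fq // u.degree < ((M.natDegree : ℕ) : ℕ) ∧ Q u} ×
       {h : Polynomial Fq // h.degree < ((X - M.natDegree : ℕ) : ℕ)}) :=
    fun a => (⟨a.1 %ₘ M, by rw [← hdegM]; exact degree_modByMonic_lt _ hM,
        (hQ _ _ (dvd_sub_modByMonic M a.1 hM)).mpr a.2.2⟩,
      ⟨a.1 /ₘ M, hdiv a.1 a.2.1⟩)
  have hbij : Function.Bijective f := by
    constructor
    · rintro ⟨a, ha, hQa⟩ ⟨b, hb, hQb⟩ hab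
      simp only [f, Prod.mk.injEq, Subtype.mk.injEq] at hab
      obtain ⟨e1, e2⟩ := hab
      have ka := modByMonic_add_div a M
      have kb := modByMonic_add_div b M
      apply Subtype.ext
      show a = b
      rw [← ka, ← kb, e1, e2]
    · rintro ⟨⟨u, hu, hQu⟩, ⟨h, hh⟩⟩
      set a : Polynomial Fq := u + M * h with haa
      have hadeg : a.degree < (X : ℕ) := by
        refine lt_of_le_of_lt (degree_add_le _ _) (max_lt ?_ ?_)
        · exact lt_of_lt_of_le hu (by exact_mod_cast hX)
        · rcases eq_or_ne h 0 with h0 | h0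
          · rw [h0, mul_zero, degree_zero]
            exact_mod_cast WithBot.bot_lt_coe _
          · rw [← natDegree_lt_iff_degree_lt (mul_ne_zero hM0 h0), natDegree_mul hM0 h0]
            rw [← natDegree_lt_iff_degree_lt h0] at hh
            omega
      have hQa : Q a := (hQ a u ⟨h, by rw [haa]; ring⟩).mpr hQu
      have r1 : a %ₘ M = u := mod_eq_of_dvd M a u hM ⟨h, by rw [haa]; ring⟩
        (by rw [hdegM]; exact hu)
      have r2 : a /ₘ M = h := by
        have ka := modByMonic_add_div a M
        rw [r1] at ka
        have : M * (a /ₘ M) = M * h := by linear_combination ka - haa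
        exact mul_left_cancel₀ hM0 this
      exact ⟨⟨a, hadeg, hQa⟩, by simp only [f, Prod.mk.injEq]; exact ⟨Subtype.ext r1, Subtype.ext r2⟩⟩
  rw [Nat.card_congr (Equiv.ofBijective f hbij), Nat.card_prod, card_degLT]

lemma card_tuple (r : ℕ) (hr : 2 ≤ r) (X : ℕ) (P : Polynomial Fq → Prop) :
    Nat.card {g : Fin r → Polynomial Fq //
        g ⟨r - 1, by omega⟩ ≠ 0 ∧ (∀ i, (g i).degree < (X : ℕ)) ∧ P (g ⟨r - 1, by omega⟩)} =
      Nat.card {a : Polynomial Fq // a ≠ 0 ∧ a.degree < (X : ℕ) ∧ P a} *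
        Fintype.card Fq ^ ((r - 1) * X) := by
  classical
  let f : {g : Fin r → Polynomial Fq //
        g ⟨r - 1, by omega⟩ ≠ 0 ∧ (∀ i, (g i).degree < (X : ℕ)) ∧ P (g ⟨r - 1, by omega⟩)} →
      ({a : Polynomial Fq // a ≠ 0 ∧ a.degree < (X : ℕ) ∧ P a} ×
        (Fin (r - 1) → {b : Polynomial Fq // b.degree < (X : ℕ)})) :=
    fun g => (⟨g.1 ⟨r - 1, by omega⟩, g.2.1, g.2.2.1 _, g.2.2.2⟩,
      fun i => ⟨g.1 ⟨i.1, by omega⟩, g.2.2.1 _⟩)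
  have hbij : Function.Bijective f := by
    constructor
    · rintro ⟨g, hg⟩ ⟨g', hg'⟩ hab
      simp only [f, Prod.mk.injEq, Subtype.mk.injEq] at hab
      obtain ⟨e1, e2⟩ := hab
      apply Subtype.ext
      funext i
      rcases lt_or_ge (i.1) (r - 1) with hi | hi
      · have := congrArg Subtype.val (congrFun e2 ⟨i.1, hi⟩)
        simpa [Fin.eta] using this
      · have hieq : i = ⟨r - 1, by omega⟩ := Fin.ext (show i.1 = r - 1 by have := i.2; omega)
        rw [hieq]; exact e1
    · rintro ⟨⟨a, ha0, haX, haP⟩, h⟩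
      refine ⟨⟨fun i => if hi : (i : ℕ) < r - 1 then (h ⟨i.1, hi⟩).1 else a, ?_, ?_, ?_⟩, ?_⟩
      · simpa using ha0
      · intro i
        by_cases hi : (i : ℕ) < r - 1
        · simpa [hi] using (h ⟨i.1, hi⟩).2
        · simpa [hi] using haX
      · simpa using haP
      · simp only [f, Prod.mk.injEq]
        refine ⟨Subtype.ext (by simp), ?_⟩
        funext i
        exact Subtype.ext (by simp [i.2])
  rw [Nat.card_congr (Equiv.ofBijective f hbij), Nat.card_prod, Nat.card_pi]
  simp only [card_degLT]
  rw [Finset.prod_const, Finset.card_univ, Fintype.card_fin, ← pow_mul, mul_comm X (r-1)]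

lemma card_nonzero (X : ℕ) (P : Polynomial Fq → Prop) (hP0 : P 0) :
    Nat.card {a : Polynomial Fq // a.degree < (X : ℕ) ∧ P a} =
      Nat.card {a : Polynomial Fq // a ≠ 0 ∧ a.degree < (X : ℕ) ∧ P a} + 1 := by
  classical
  have e : {a : Polynomial Fq // a.degree < (X : ℕ) ∧ P a} ≃
      ({a : Polynomial Fq // a ≠ 0 ∧ a.degree < (X : ℕ) ∧ P a} ⊕ PUnit.{1}) := by
    refine ⟨fun a => if h : a.1 = 0 then Sum.inr PUnit.unit else Sum.inl ⟨a.1, h, a.2⟩,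
      fun x => Sum.rec (fun b => ⟨b.1, b.2.2⟩)
        (fun _ => ⟨0, by rw [degree_zero]; exact_mod_cast WithBot.bot_lt_coe _, hP0⟩) x,
      ?_, ?_⟩
    · rintro ⟨a, ha⟩
      by_cases h : a = 0
      · simp [h]
      · simp [h]
    · rintro (⟨b, hb0, hb⟩ | ⟨⟩)
      · simp [hb0]
      · simp
  haveI : Finite {a : Polynomial Fq // a ≠ 0 ∧ a.degree < (X : ℕ) ∧ P a} :=
    fin_of_deg (Fq := Fq) X (fun a => a ≠ 0 ∧ a.degree < (X : ℕ) ∧ P a) (fun _ ha => ha.2.1)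
  rw [Nat.card_congr e, Nat.card_sum]
  simp

lemma card_final (p : ℕ) (hp : 1 ≤ p) (S0 : Finset (Polynomial Fq))
    (hS0 : ∀ l ∈ S0, l.Monic ∧ Irreducible l) (X : ℕ)
    (hX : (∏ l ∈ S0, l ^ p).natDegree ≤ X) :
    Nat.card {a : Polynomial Fq // a ≠ 0 ∧ a.degree < (X : ℕ) ∧
        ∀ l ∈ S0, ¬ l ∣ a ∨ l ^ p ∣ a} + 1 =
      (∏ l ∈ S0, (Fintype.card Fq ^ (p * l.natDegree) -
          Fintype.card Fq ^ ((p - 1) * l.natDegree) + 1)) *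
        Fintype.card Fq ^ (X - (∏ l ∈ S0, l ^ p).natDegree) := by
  have hM : (∏ l ∈ S0, l ^ p).Monic := monic_prod_of_monic _ _ (fun l hl => (hS0 l hl).1.pow _)
  have hQM : ∀ a b : Polynomial Fq, (∏ l ∈ S0, l ^ p) ∣ a - b →
      ((∀ l ∈ S0, ¬ l ∣ a ∨ l ^ p ∣ a) ↔ (∀ l ∈ S0, ¬ l ∣ b ∨ l ^ p ∣ b)) := by
    intro a b hab
    refine forall₂_congr (fun l hl => ?_)
    have hdvd : l ^ p ∣ a - b :=
      dvd_trans (Finset.dvd_prod_of_mem (f := fun x => x ^ p) hl) hab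
    have h1 : l ∣ a - b := dvd_trans (dvd_pow_self l (by omega)) hdvd
    rw [dvd_iff_of_dvd_sub h1, dvd_iff_of_dvd_sub hdvd]
  rw [← card_nonzero X _ (fun l _ => Or.inr (dvd_zero _)),
    card_scale _ hM _ hQM X hX, card_prod_set p hp S0 hS0]


/-- Let S_0 be a fixed finite set of monic irreducibles of F_q[T] and let S
be the set of tuples (g_1,...,g_r) with g_r ≠ 0 such that for every l ∈ S_0 one has
v_l(g_r) = 0 (i.e. l ∤ g_r) or v_l(g_r) ≥ p (i.e. l^p ∣ g_r). Then the density of S equals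
∏_{l ∈ S_0} (1 - 1/q_l + 1/q_l^p) with q_l = q^{deg l}. -/
theorem stmt_11 (p : ℕ) (hp : p.Prime) (q n : ℕ) (hn : 0 < n) (hq : q = p ^ n)
    (Fq : Type) [Field Fq] [Fintype Fq] (hcard : Fintype.card Fq = q)
    (r : ℕ) (hr : 2 ≤ r)
    (S0 : Finset (Polynomial Fq)) (hS0 : ∀ l ∈ S0, l.Monic ∧ Irreducible l) :
    Filter.Tendsto
      (fun X : ℕ =>
        (Nat.card {g : Fin r → Polynomial Fq //
            g ⟨r - 1, by omega⟩ ≠ 0 ∧ (∀ i, (g i).degree < (X : ℕ)) ∧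
            ∀ l ∈ S0, ¬ l ∣ g ⟨r - 1, by omega⟩ ∨ l ^ p ∣ g ⟨r - 1, by omega⟩} : ℝ) /
          ((q : ℝ) ^ (r * X) - (q : ℝ) ^ ((r - 1) * X)))
      Filter.atTop
      (nhds (∏ l ∈ S0,
        ((1 : ℝ) - 1 / (q : ℝ) ^ l.natDegree + 1 / (q : ℝ) ^ (p * l.natDegree)))) := by
    classical
  have hp1 : 1 ≤ p := hp.pos
  have hq2 : 2 ≤ q := by
    rw [hq]
    calc 2 ≤ p := hp.two_le
    _ ≤ p ^ n := Nat.le_self_pow (by omega) p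
  have hQ1 : (1 : ℝ) < (q : ℝ) := by exact_mod_cast (by omega : 1 < q)
  have hQ0 : (0 : ℝ) < (q : ℝ) := by linarith
  set D : ℕ := (∏ l ∈ S0, l ^ p).natDegree with hD
  set Cn : ℕ := ∏ l ∈ S0, (q ^ (p * l.natDegree) - q ^ ((p - 1) * l.natDegree) + 1) with hCn
  have hcountA : ∀ X : ℕ, D ≤ X →
      (Nat.card {g : Fin r → Polynomial Fq //
          g ⟨r - 1, by omega⟩ ≠ 0 ∧ (∀ i, (g i).degree < (X : ℕ)) ∧
          ∀ l ∈ S0, ¬ l ∣ g ⟨r - 1, by omega⟩ ∨ l ^ p ∣ g ⟨r - 1, by omega⟩} : ℝ) =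
      ((Cn : ℝ) * (q : ℝ) ^ (X - D) - 1) * (q : ℝ) ^ ((r - 1) * X) := by
    intro X hX
    have htup : Nat.card {g : Fin r → Polynomial Fq //
          g ⟨r - 1, by omega⟩ ≠ 0 ∧ (∀ i, (g i).degree < (X : ℕ)) ∧
          ∀ l ∈ S0, ¬ l ∣ g ⟨r - 1, by omega⟩ ∨ l ^ p ∣ g ⟨r - 1, by omega⟩} =
        Nat.card {a : Polynomial Fq // a ≠ 0 ∧ a.degree < (X : ℕ) ∧
          ∀ l ∈ S0, ¬ l ∣ a ∨ l ^ p ∣ a} * Fintype.card Fq ^ ((r - 1) * X) :=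
      card_tuple r hr X (fun a => ∀ l ∈ S0, ¬ l ∣ a ∨ l ^ p ∣ a)
    have hfin := card_final p hp1 S0 hS0 X hX
    rw [hcard] at htup hfin
    rw [htup]
    push_cast
    have hc : (Nat.card {a : Polynomial Fq // a ≠ 0 ∧ a.degree < (X : ℕ) ∧
        ∀ l ∈ S0, ¬ l ∣ a ∨ l ^ p ∣ a} : ℝ) + 1 = (Cn : ℝ) * (q : ℝ) ^ (X - D) := by
      exact_mod_cast congrArg (Nat.cast (R := ℝ)) hfin
    have : (Nat.card {a : Polynomial Fq // a ≠ 0 ∧ a.degree < (X : ℕ) ∧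
        ∀ l ∈ S0, ¬ l ∣ a ∨ l ^ p ∣ a} : ℝ) = (Cn : ℝ) * (q : ℝ) ^ (X - D) - 1 := by
      linarith
    rw [this]
  have hev : ∀ᶠ X in Filter.atTop,
      (Nat.card {g : Fin r → Polynomial Fq //
          g ⟨r - 1, by omega⟩ ≠ 0 ∧ (∀ i, (g i).degree < (X : ℕ)) ∧
          ∀ l ∈ S0, ¬ l ∣ g ⟨r - 1, by omega⟩ ∨ l ^ p ∣ g ⟨r - 1, by omega⟩} : ℝ) /
        ((q : ℝ) ^ (r * X) - (q : ℝ) ^ ((r - 1) * X)) =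
      ((Cn : ℝ) / (q : ℝ) ^ D - (1 / (q : ℝ)) ^ X) / (1 - (1 / (q : ℝ)) ^ X) := by
    filter_upwards [Filter.eventually_ge_atTop (max D 1)] with X hX
    have hXD : D ≤ X := le_trans (le_max_left _ _) hX
    have hX1 : 1 ≤ X := le_trans (le_max_right _ _) hX
    rw [hcountA X hXD]
    have hqX1 : (1 : ℝ) < (q : ℝ) ^ X := one_lt_pow₀ hQ1 (by omega)
    have e1 : (q : ℝ) ^ (X - D) = (q : ℝ) ^ X / (q : ℝ) ^ D := by
      rw [eq_div_iff (by positivity), pow_sub_mul_pow _ hXD]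
    have hX' : X ≤ r * X := Nat.le_mul_of_pos_left X (by omega)
    have e2 : (q : ℝ) ^ (r * X) = (q : ℝ) ^ ((r - 1) * X) * (q : ℝ) ^ X := by
      rw [← pow_add]
      congr 1
      rw [Nat.sub_mul, one_mul]
      omega
    have e3 : ((1 : ℝ) / (q : ℝ)) ^ X = 1 / (q : ℝ) ^ X := by rw [div_pow, one_pow]
    rw [e1, e2, e3]
    have h1 : (q : ℝ) ^ X ≠ 0 := by positivity
    have h2 : (q : ℝ) ^ D ≠ 0 := by positivity
    have h3 : (q : ℝ) ^ ((r - 1) * X) ≠ 0 := by positivity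
    have h4 : (q : ℝ) ^ X - 1 ≠ 0 := ne_of_gt (by linarith)
    set y : ℝ := (q : ℝ) ^ X with hy
    set z : ℝ := (q : ℝ) ^ D with hz
    set w : ℝ := (q : ℝ) ^ ((r - 1) * X) with hw
    have h6 : w * y - w ≠ 0 := by
      have : w * y - w = w * (y - 1) := by ring
      rw [this]
      exact mul_ne_zero h3 h4
    have h5 : 1 - 1 / y ≠ 0 := by
      have hyy : (1 - 1 / y) * y = y - 1 := by
        field_simp
      intro hc
      rw [hc, zero_mul] at hyy
      exact h4 hyy.symm
    rw [div_eq_div_iff h6 h5]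
    field_simp
  have h0 : Filter.Tendsto (fun X : ℕ => ((1 : ℝ) / (q : ℝ)) ^ X) Filter.atTop (nhds 0) :=
    tendsto_pow_atTop_nhds_zero_of_lt_one (by positivity)
      (by rw [div_lt_one hQ0]; exact hQ1)
  have hlim : Filter.Tendsto
      (fun X : ℕ => ((Cn : ℝ) / (q : ℝ) ^ D - (1 / (q : ℝ)) ^ X) / (1 - (1 / (q : ℝ)) ^ X))
      Filter.atTop (nhds ((Cn : ℝ) / (q : ℝ) ^ D)) := by
    have := (Filter.Tendsto.sub (tendsto_const_nhds (x := (Cn : ℝ) / (q : ℝ) ^ D)) h0).div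
      (Filter.Tendsto.sub (tendsto_const_nhds (x := (1 : ℝ))) h0) (by norm_num)
    simp only [sub_zero, div_one] at this
    exact this
  have hval : (Cn : ℝ) / (q : ℝ) ^ D =
      ∏ l ∈ S0, ((1 : ℝ) - 1 / (q : ℝ) ^ l.natDegree + 1 / (q : ℝ) ^ (p * l.natDegree)) := by
    have hDsum : D = ∑ l ∈ S0, p * l.natDegree := by
      rw [hD, natDegree_prod _ _ (fun l hl => pow_ne_zero _ (hS0 l hl).2.ne_zero)]
      exact Finset.sum_congr rfl (fun l _ => natDegree_pow _ _)
    have hcast : (Cn : ℝ) =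
        ∏ l ∈ S0, ((q : ℝ) ^ (p * l.natDegree) - (q : ℝ) ^ ((p - 1) * l.natDegree) + 1) := by
      rw [hCn]
      push_cast
      refine Finset.prod_congr rfl (fun l _ => ?_)
      have hle : q ^ ((p - 1) * l.natDegree) ≤ q ^ (p * l.natDegree) :=
        Nat.pow_le_pow_right (by omega) (Nat.mul_le_mul_right _ (by omega))
      push_cast [hle]
      ring
    rw [hcast, hDsum, ← Finset.prod_pow_eq_pow_sum, ← Finset.prod_div_distrib]
    refine Finset.prod_congr rfl (fun l _ => ?_)
    have hsplit : p * l.natDegree = (p - 1) * l.natDegree + l.natDegree := by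
      rw [Nat.sub_mul, one_mul]
      have : l.natDegree ≤ p * l.natDegree := Nat.le_mul_of_pos_left _ (by omega)
      omega
    have h2 : (q : ℝ) ^ (p * l.natDegree) =
        (q : ℝ) ^ ((p - 1) * l.natDegree) * (q : ℝ) ^ l.natDegree := by
      rw [hsplit, pow_add]
    have hd1 : (q : ℝ) ^ l.natDegree ≠ 0 := by positivity
    have hd2 : (q : ℝ) ^ ((p - 1) * l.natDegree) ≠ 0 := by positivity
    rw [h2]
    field_simp
  rw [← hval]
  exact Filter.Tendsto.congr' (Filter.EventuallyEq.symm hev) hlim
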